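/- Suppose G₁, ..., G_h are graphs whose pairwise intersections all equal a single common vertex v, and G is their union. Then T(G) = (Σᵢ T(Gᵢ)) - h + 1. -/

import Mathlib

open SimpleGraph

/-- A tree cover of `G`: vertex-disjoint induced subtrees covering all vertices. -/
def IsTreeCover {V : Type} (G : SimpleGraph V) (C : Finset (Set V)) : Prop :=
  (∀ s ∈ C, (G.induce s).IsTree) ∧ (∀ v : V, ∃ s ∈ C, v ∈ s) ∧
    (C : Set (Set V)).PairwiseDisjoint id

/-- The tree cover number: minimum cardinality of a tree cover. -/
noncomputable def treeCoverNumber {V : Type} (G : SimpleGraph V) : ℕ :=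
  sInf {n | ∃ C : Finset (Set V), IsTreeCover G C ∧ C.card = n}


section Helpers

variable {V : Type} {G : SimpleGraph V}

lemma induce_val_injective {t : Set V} :
    Function.Injective ((SimpleGraph.Embedding.induce t (G := G)).toHom : ↥t → V) :=
  Subtype.val_injective

/-- Lift a walk whose support lies in `t` to the induced subgraph on `t`. -/
lemma exists_lift_walk {t : Set V} :
    ∀ {a b : V} (p : G.Walk a b) (ha : a ∈ t) (hb : b ∈ t),
      (∀ x ∈ p.support, x ∈ t) →
      ∃ q : (G.induce t).Walk ⟨a, ha⟩ ⟨b, hb⟩,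
        q.map (SimpleGraph.Embedding.induce t).toHom = p := by
  intro a b p
  induction p with
  | nil => exact fun ha hb _ => ⟨Walk.nil, rfl⟩
  | @cons a c b h p ih =>
    intro ha hb hsub
    have hc : c ∈ t := hsub c (by simp)
    obtain ⟨q, hq⟩ := ih hc hb (fun x hx => hsub x (List.mem_cons_of_mem _ hx))
    exact ⟨Walk.cons (by simpa using h) q, by simp [hq]⟩

lemma false_of_cycle_support_subset {w : Set V} {u : V} {c : G.Walk u u}
    (hc : c.IsCycle) (hsub : ∀ x ∈ c.support, x ∈ w)
    (hac : (G.induce w).IsAcyclic) : False := by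
  have hu : u ∈ w := hsub u c.start_mem_support
  obtain ⟨q, hq⟩ := exists_lift_walk c hu hu hsub
  refine hac q ?_
  rw [← Walk.map_isCycle_iff_of_injective (induce_val_injective (G := G) (t := w)), hq]
  exact hc

lemma reachable_induce_of_support {w : Set V} {a b : V} (p : G.Walk a b)
    (ha : a ∈ w) (hb : b ∈ w) (hsub : ∀ x ∈ p.support, x ∈ w) :
    (G.induce w).Reachable ⟨a, ha⟩ ⟨b, hb⟩ := by
  obtain ⟨q, _⟩ := exists_lift_walk p ha hb hsub
  exact ⟨q⟩

lemma reachable_induce_mono {w u : Set V} (hwu : w ⊆ u) {x y : ↥w}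
    (hr : (G.induce w).Reachable x y) :
    (G.induce u).Reachable ⟨x.1, hwu x.2⟩ ⟨y.1, hwu y.2⟩ :=
  hr.map (SimpleGraph.induceHom SimpleGraph.Hom.id (fun _ hz => hwu hz))

lemma support_mem_of_walk_induce {w : Set V} {x y : ↥w} (q : (G.induce w).Walk x y)
    {z : V} (hz : z ∈ (q.map (SimpleGraph.Embedding.induce w).toHom).support) : z ∈ w := by
  rw [Walk.support_map] at hz
  obtain ⟨z', _, rfl⟩ := List.mem_map.mp hz
  exact z'.2

lemma acyclic_of_iso {W W' : Type} {H : SimpleGraph W} {H' : SimpleGraph W'}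
    (e : H ≃g H') (h : H'.IsAcyclic) : H.IsAcyclic := by
  intro u c hc
  exact h (c.map e.toHom) (hc.map (e.toEquiv.injective))

lemma isTree_iff_of_iso {W W' : Type} {H : SimpleGraph W} {H' : SimpleGraph W'}
    (e : H ≃g H') : H.IsTree ↔ H'.IsTree := by
  rw [isTree_iff, isTree_iff, e.connected_iff]
  exact and_congr_right fun _ =>
    ⟨fun h => acyclic_of_iso e.symm h, fun h => acyclic_of_iso e h⟩

/-- `(G.induce s).induce c` is isomorphic to `G.induce (val '' c)`. -/
noncomputable def induceInduceIso (s : Set V) (c : Set ↥s) :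
    (G.induce s).induce c ≃g G.induce (Subtype.val '' c) where
  toEquiv := Equiv.Set.image Subtype.val c Subtype.val_injective
  map_rel_iff' := Iff.rfl

lemma isTree_induce_singleton (x : V) : (G.induce {x}).IsTree := by
  constructor
  · rw [connected_iff]
    refine ⟨fun a b => ?_, ⟨⟨x, rfl⟩⟩⟩
    have : a = b := Subsingleton.elim a b
    exact this ▸ Reachable.refl _
  · intro u c hc
    cases c with
    | nil => exact hc.ne_nil rfl
    | cons h p => exact h.ne (Subsingleton.elim _ _)

end Helpers


section Confine

variable {V : Type} {G : SimpleGraph V} {h : ℕ} {s : Fin h → Set V} {v : V}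
variable (hint : ∀ i j, i ≠ j → s i ∩ s j = {v})
variable (hedge : ∀ a b : V, G.Adj a b → ∃ i, a ∈ s i ∧ b ∈ s i)

include hint hedge

/-- If an edge leaves `s i`, its endpoint inside `s i` is `v`. -/
lemma eq_v_of_cross {a c : V} {i : Fin h} (hadj : G.Adj a c)
    (ha : a ∈ s i) (hc : c ∉ s i) : a = v := by
  obtain ⟨k, hak, hck⟩ := hedge a c hadj
  have hki : k ≠ i := fun e => hc (e ▸ hck)
  have : a ∈ s i ∩ s k := ⟨ha, hak⟩
  rw [hint i k (Ne.symm hki)] at this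
  exact this

/-- A walk entering `s i` from outside passes through `v`. -/
lemma mem_support_of_crossing {i : Fin h} :
    ∀ {a b : V} (p : G.Walk a b), a ∉ s i → b ∈ s i → v ∈ p.support := by
  intro a b p
  induction p with
  | nil => exact fun ha hb => absurd hb ha
  | @cons a c b hadj p ih =>
    intro ha hb
    by_cases hc : c ∈ s i
    · have : c = v := eq_v_of_cross hint hedge hadj.symm hc ha
      exact this ▸ (Walk.support_cons _ _ ▸ List.mem_cons_of_mem _ p.start_mem_support)
    · exact Walk.support_cons _ _ ▸ List.mem_cons_of_mem _ (ih hc hb)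

/-- A path between two vertices of `s i` stays in `s i`. -/
lemma path_confined {i : Fin h} :
    ∀ {a b : V} (p : G.Walk a b), p.IsPath → a ∈ s i → b ∈ s i →
      ∀ x ∈ p.support, x ∈ s i := by
  intro a b p
  induction p with
  | nil => intro _ ha _ x hx; simp at hx; exact hx ▸ ha
  | @cons a c b hadj p ih =>
    intro hp ha hb x hx
    rw [Walk.support_cons, List.mem_cons] at hx
    rcases hx with rfl | hx
    · exact ha
    by_cases hc : c ∈ s i
    · exact ih hp.of_cons hc hb x hx
    · exfalso
      have hav : a = v := eq_v_of_cross hint hedge hadj ha hc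
      have hv : v ∈ p.support := mem_support_of_crossing hint hedge p hc hb
      rw [Walk.cons_isPath_iff] at hp
      exact hp.2 (hav ▸ hv)

/-- A walk avoiding `v` starting in `s i` stays in `s i`. -/
lemma walk_confined_of_v_not_mem {i : Fin h} :
    ∀ {a b : V} (p : G.Walk a b), a ∈ s i → v ∉ p.support →
      ∀ x ∈ p.support, x ∈ s i := by
  intro a b p
  induction p with
  | nil => intro ha _ x hx; simp at hx; exact hx ▸ ha
  | @cons a c b hadj p ih =>
    intro ha hnv x hx
    have hnv' : v ∉ p.support := fun hm =>
      hnv (Walk.support_cons _ _ ▸ List.mem_cons_of_mem _ hm)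
    have hc : c ∈ s i := by
      by_contra hc
      exact hnv (Walk.support_cons _ _ ▸
        (eq_v_of_cross hint hedge hadj ha hc ▸ List.mem_cons_self))
    rw [Walk.support_cons, List.mem_cons] at hx
    rcases hx with rfl | hx
    · exact ha
    · exact ih hc hnv' x hx

/-- A walk to `v` not meeting `v` before the end, starting in `s i`, stays in `s i`. -/
lemma walk_to_v_confined' {i : Fin h} :
    ∀ {a b : V} (p : G.Walk a b), b = v → a ∈ s i → v ∉ p.support.dropLast →
      ∀ x ∈ p.support, x ∈ s i := by
  intro a b p
  induction p with
  | nil => intro hb ha _ x hx; simp at hx; exact hx ▸ ha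
  | @cons a c b hadj p ih =>
    intro hb ha hnv x hx
    subst hb
    have hdl : (Walk.cons hadj p).support.dropLast = a :: p.support.dropLast := by
      rw [Walk.support_cons]
      exact List.dropLast_cons_of_ne_nil p.support_ne_nil
    rw [hdl, List.mem_cons] at hnv
    push_neg at hnv
    have hc : c ∈ s i := by
      by_contra hc
      exact hnv.1 (eq_v_of_cross hint hedge hadj ha hc).symm
    rw [Walk.support_cons, List.mem_cons] at hx
    rcases hx with rfl | hx
    · exact ha
    · exact ih rfl hc hnv.2 x hx

lemma walk_to_v_confined {i : Fin h} {a : V} (p : G.Walk a v) (ha : a ∈ s i)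
    (hnv : v ∉ p.support.dropLast) : ∀ x ∈ p.support, x ∈ s i :=
  walk_to_v_confined' hint hedge p rfl ha hnv

/-- The support of any cycle is confined to a single `s i`. -/
lemma cycle_confined (hv : ∀ j, v ∈ s j) {u : V} (c : G.Walk u u)
    (hc : c.IsCycle) (hu : ∃ i, u ∈ s i) :
    ∃ i, ∀ x ∈ c.support, x ∈ s i := by
  classical
  by_cases hvc : v ∈ c.support
  · -- rotate the cycle to start at v
    set c₂ := c.rotate v hvc with hc₂def
    have hc₂ : c₂.IsCycle := hc.rotate hvc
    have htail : ∀ x ∈ c.support, x ∈ c₂.support := by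
      intro x hx
      have hperm := (c.support_rotate v hvc).perm
      rw [Walk.mem_support_iff] at hx ⊢
      rcases hx with rfl | hx
      · -- u is at the end of c, so in the tail of c
        right
        have : x ∈ c.support.tail := by
          cases c with
          | nil => exact absurd rfl hc.ne_nil
          | cons hadj p => simpa using p.end_mem_support
        exact hperm.symm.mem_iff.mp this
      · exact Or.inr (hperm.symm.mem_iff.mp hx)
    cases hq : c₂ with
    | nil => rw [hq] at hc₂; exact absurd rfl hc₂.ne_nil
    | @cons _ d _ hadj r =>
      obtain ⟨j, _, hdj⟩ := hedge v d hadj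
      have hrtail : r.support = c₂.support.tail := by rw [hq, Walk.support_cons]; rfl
      have hnodup : r.support.Nodup := by
        rw [hrtail]; exact hc₂.2
      have hlast : r.support.getLast (r.support_ne_nil) = v := r.getLast_support
      have hvdl : v ∉ r.support.dropLast := by
        intro hm
        have h1 := List.dropLast_append_getLast r.support_ne_nil
        rw [← h1] at hnodup
        have hdisj := List.disjoint_of_nodup_append hnodup
        exact hdisj hm (by simp [hlast])
      have hr : ∀ x ∈ r.support, x ∈ s j :=
        walk_to_v_confined hint hedge r hdj hvdl
      refine ⟨j, fun x hx => ?_⟩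
      have hx₂ : x ∈ c₂.support := htail x hx
      rw [hq, Walk.support_cons, List.mem_cons] at hx₂
      rcases hx₂ with rfl | hx₂
      · exact hv j
      · exact hr x hx₂
  · obtain ⟨i, hu⟩ := hu
    exact ⟨i, walk_confined_of_v_not_mem hint hedge c hu hvc⟩

end Confine



section TCN
variable {V : Type} {G : SimpleGraph V}


lemma exists_treeCover (G : SimpleGraph V) [Fintype V] :
    ∃ C, IsTreeCover G C ∧ C.card = treeCoverNumber G := by
  classical
  have hne : {n | ∃ C : Finset (Set V), IsTreeCover G C ∧ C.card = n}.Nonempty := by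
    refine ⟨_, Finset.univ.image (fun x : V => ({x} : Set V)), ⟨?_, ?_, ?_⟩, rfl⟩
    · intro t ht
      obtain ⟨a, -, rfl⟩ := Finset.mem_image.mp ht
      exact isTree_induce_singleton a
    · intro w
      exact ⟨{w}, Finset.mem_image.mpr ⟨w, Finset.mem_univ w, rfl⟩, rfl⟩
    · intro a ha b hb hab
      obtain ⟨x, -, rfl⟩ := Finset.mem_image.mp ha
      obtain ⟨y, -, rfl⟩ := Finset.mem_image.mp hb
      exact Set.disjoint_singleton.mpr (fun e => hab (by rw [e]))
  exact Nat.sInf_mem hne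

lemma tcn_le {C : Finset (Set V)} (hC : IsTreeCover G C) :
    treeCoverNumber G ≤ C.card :=
  Nat.sInf_le ⟨C, hC, rfl⟩

lemma tcn_pos [Fintype V] [Nonempty V] : 1 ≤ treeCoverNumber G := by
  obtain ⟨C, hC, hcard⟩ := exists_treeCover G
  obtain ⟨t, ht, -⟩ := hC.2.1 (Classical.arbitrary V)
  rw [← hcard]
  exact Finset.card_pos.mpr ⟨t, ht⟩

end TCN



lemma sum_le_tcn {V : Type} [Fintype V] {G : SimpleGraph V} {h : ℕ} {s : Fin h → Set V} {v : V}
    (hint : ∀ i j, i ≠ j → s i ∩ s j = {v})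
    (hedge : ∀ a b : V, G.Adj a b → ∃ i, a ∈ s i ∧ b ∈ s i) :
    (∑ i, treeCoverNumber (G.induce (s i))) + 1 ≤ treeCoverNumber G + h := by
  classical
  obtain ⟨C, ⟨hCtree, hCcov, hCdisj⟩, hCcard⟩ := exists_treeCover G
  have key : ∀ i : Fin h,
      treeCoverNumber (G.induce (s i)) ≤ (C.filter (fun t => (s i ∩ t).Nonempty)).card := by
    intro i
    have hR : IsTreeCover (G.induce (s i))
        ((C.filter (fun t => (s i ∩ t).Nonempty)).image (fun t => Subtype.val ⁻¹' t)) := by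
      refine ⟨?_, ?_, ?_⟩
      · intro c hc
        obtain ⟨t, ht, rfl⟩ := Finset.mem_image.mp hc
        rw [Finset.mem_filter] at ht
        obtain ⟨htC, htne⟩ := ht
        have htree := hCtree t htC
        rw [isTree_iff_of_iso (induceInduceIso (s i) (Subtype.val ⁻¹' t)),
          Subtype.image_preimage_coe]
        constructor
        · rw [connected_iff]
          constructor
          · rintro ⟨a, hai, hat⟩ ⟨b, hbi, hbt⟩
            obtain ⟨p0⟩ := htree.isConnected.preconnected ⟨a, hat⟩ ⟨b, hbt⟩
            set p := p0.toPath with hp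
            have hp' : (p.1.map (SimpleGraph.Embedding.induce t).toHom).IsPath :=
              Walk.map_isPath_of_injective induce_val_injective p.2
            have hsubt : ∀ x ∈ (p.1.map (SimpleGraph.Embedding.induce t).toHom).support,
                x ∈ t := fun x hx => support_mem_of_walk_induce p.1 hx
            have hsubi := path_confined hint hedge _ hp' hai hbi
            exact reachable_induce_of_support (w := s i ∩ t)
              (p.1.map (SimpleGraph.Embedding.induce t).toHom) ⟨hai, hat⟩ ⟨hbi, hbt⟩
              (fun x hx => ⟨hsubi x hx, hsubt x hx⟩)
          · obtain ⟨a, ha⟩ := htne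
            exact ⟨⟨a, ha⟩⟩
        · intro u cyc hcyc
          have hcyc' : (cyc.map (SimpleGraph.Embedding.induce (s i ∩ t)).toHom).IsCycle :=
            hcyc.map induce_val_injective
          refine false_of_cycle_support_subset hcyc' ?_ htree.IsAcyclic
          exact fun x hx => (support_mem_of_walk_induce cyc hx).2
      · intro x
        obtain ⟨t, htC, hxt⟩ := hCcov x.1
        refine ⟨Subtype.val ⁻¹' t, Finset.mem_image.mpr ⟨t, ?_, rfl⟩, hxt⟩
        exact Finset.mem_filter.mpr ⟨htC, ⟨x.1, x.2, hxt⟩⟩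
      · intro a ha b hb hab
        obtain ⟨t₁, ht₁, rfl⟩ := Finset.mem_image.mp ha
        obtain ⟨t₂, ht₂, rfl⟩ := Finset.mem_image.mp hb
        have hne : t₁ ≠ t₂ := fun e => hab (by rw [e])
        have hd := hCdisj (Finset.mem_coe.mpr (Finset.mem_filter.mp ht₁).1)
          (Finset.mem_coe.mpr (Finset.mem_filter.mp ht₂).1) hne
        exact Disjoint.preimage _ hd
    exact le_trans (tcn_le hR) Finset.card_image_le
  obtain ⟨tv, htvC, htvv⟩ := hCcov v
  have hswap : (∑ i : Fin h, (C.filter (fun t => (s i ∩ t).Nonempty)).card)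
      = ∑ t ∈ C, (Finset.univ.filter (fun i : Fin h => (s i ∩ t).Nonempty)).card := by
    simp_rw [Finset.card_filter]
    exact Finset.sum_comm
  have hone : ∀ t ∈ C.erase tv,
      (Finset.univ.filter (fun i : Fin h => (s i ∩ t).Nonempty)).card ≤ 1 := by
    intro t ht
    obtain ⟨htne, htC⟩ := Finset.mem_erase.mp ht
    have hvt : v ∉ t := by
      intro hvt
      have hd := hCdisj (Finset.mem_coe.mpr htC) (Finset.mem_coe.mpr htvC) htne
      exact (Set.disjoint_left.mp hd) hvt htvv
    refine Finset.card_le_one.mpr ?_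
    intro i hi j hj
    by_contra hij
    obtain ⟨a, hai, hat⟩ := (Finset.mem_filter.mp hi).2
    obtain ⟨b, hbj, hbt⟩ := (Finset.mem_filter.mp hj).2
    have hanj : a ∉ s j := by
      intro haj
      have hmem : a ∈ s i ∩ s j := ⟨hai, haj⟩
      rw [hint i j hij] at hmem
      exact hvt (hmem ▸ hat)
    have htree := hCtree t htC
    obtain ⟨p0⟩ := htree.isConnected.preconnected ⟨a, hat⟩ ⟨b, hbt⟩
    have hvsup := mem_support_of_crossing hint hedge
      (p0.map (SimpleGraph.Embedding.induce t).toHom) hanj hbj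
    exact hvt (support_mem_of_walk_induce p0 hvsup)
  have htv_le : (Finset.univ.filter (fun i : Fin h => (s i ∩ tv).Nonempty)).card ≤ h := by
    calc (Finset.univ.filter (fun i : Fin h => (s i ∩ tv).Nonempty)).card
        ≤ (Finset.univ : Finset (Fin h)).card := Finset.card_filter_le _ _
      _ = h := by simp
  have hsplit : ∑ t ∈ C, (Finset.univ.filter (fun i : Fin h => (s i ∩ t).Nonempty)).card
      = (Finset.univ.filter (fun i : Fin h => (s i ∩ tv).Nonempty)).card
      + ∑ t ∈ C.erase tv, (Finset.univ.filter (fun i : Fin h => (s i ∩ t).Nonempty)).card := by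
    conv_lhs => rw [← Finset.insert_erase htvC]
    rw [Finset.sum_insert (Finset.notMem_erase _ _)]
  have herase : ∑ t ∈ C.erase tv,
      (Finset.univ.filter (fun i : Fin h => (s i ∩ t).Nonempty)).card
      ≤ (C.erase tv).card := by
    calc ∑ t ∈ C.erase tv, (Finset.univ.filter
          (fun i : Fin h => (s i ∩ t).Nonempty)).card
        ≤ ∑ _t ∈ C.erase tv, 1 := Finset.sum_le_sum hone
      _ = (C.erase tv).card := by simp
  have hcerase : (C.erase tv).card = C.card - 1 := Finset.card_erase_of_mem htvC
  have hc1 : 1 ≤ C.card := Finset.card_pos.mpr ⟨tv, htvC⟩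
  have htot : (∑ i, treeCoverNumber (G.induce (s i)))
      ≤ ∑ t ∈ C, (Finset.univ.filter (fun i : Fin h => (s i ∩ t).Nonempty)).card := by
    rw [← hswap]
    exact Finset.sum_le_sum (fun i _ => key i)
  omega

lemma tcn_le_sum {V : Type} [Fintype V] {G : SimpleGraph V} {h : ℕ} (hh : 0 < h)
    {s : Fin h → Set V} {v : V}
    (hint : ∀ i j, i ≠ j → s i ∩ s j = {v})
    (hcov : (⋃ i, s i) = Set.univ)
    (hedge : ∀ a b : V, G.Adj a b → ∃ i, a ∈ s i ∧ b ∈ s i)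
    (hv : ∀ j, v ∈ s j) :
    treeCoverNumber G + h ≤ (∑ i, treeCoverNumber (G.induce (s i))) + 1 := by
  classical
  choose C hC hCcard using fun i : Fin h => exists_treeCover (G.induce (s i))
  have hex : ∀ i, ∃ c ∈ C i, (⟨v, hv i⟩ : ↥(s i)) ∈ c := fun i => (hC i).2.1 _
  choose c0 hc0mem hc0v using hex
  set T : Set V := ⋃ i, Subtype.val '' (c0 i) with hT
  set D : Fin h → Finset (Set V) :=
    fun i => ((C i).erase (c0 i)).image (fun c => Subtype.val '' c) with hD
  set Cov : Finset (Set V) := insert T (Finset.univ.biUnion D) with hCovdef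
  have hsubs : ∀ (i) (c : Set ↥(s i)), Subtype.val '' c ⊆ s i := by
    rintro i c x ⟨y, -, rfl⟩; exact y.2
  have hvT : v ∈ T := Set.mem_iUnion.mpr ⟨⟨0, hh⟩, ⟨⟨v, hv _⟩, hc0v _, rfl⟩⟩
  have hvnotD : ∀ (i), ∀ c ∈ (C i).erase (c0 i), v ∉ Subtype.val '' c := by
    intro i c hc hvc
    obtain ⟨y, hy, hyv⟩ := hvc
    obtain ⟨hcne, hcC⟩ := Finset.mem_erase.mp hc
    have hd := (hC i).2.2 (Finset.mem_coe.mpr hcC) (Finset.mem_coe.mpr (hc0mem i)) hcne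
    have hey : y = ⟨v, hv i⟩ := Subtype.ext hyv
    rw [hey] at hy
    exact Set.disjoint_left.mp hd hy (hc0v i)
  have hTi : ∀ i, T ∩ s i ⊆ Subtype.val '' (c0 i) := by
    rintro i x ⟨hxT, hxi⟩
    obtain ⟨j, hj⟩ := Set.mem_iUnion.mp hxT
    by_cases hij : j = i
    · exact hij ▸ hj
    · have hxj : x ∈ s j := hsubs j _ hj
      have hxv : x ∈ s j ∩ s i := ⟨hxj, hxi⟩
      rw [hint j i hij] at hxv
      exact hxv ▸ ⟨⟨v, hv i⟩, hc0v i, rfl⟩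
  have htreei : ∀ i, (G.induce (Subtype.val '' (c0 i))).IsTree := by
    intro i
    rw [← isTree_iff_of_iso (induceInduceIso (s i) (c0 i))]
    exact (hC i).1 _ (hc0mem i)
  have htreeD : ∀ (i), ∀ c ∈ (C i).erase (c0 i), (G.induce (Subtype.val '' c)).IsTree := by
    intro i c hc
    rw [← isTree_iff_of_iso (induceInduceIso (s i) c)]
    exact (hC i).1 _ (Finset.mem_of_mem_erase hc)
  have hTtree : (G.induce T).IsTree := by
    constructor
    · rw [connected_iff]
      refine ⟨?_, ⟨⟨v, hvT⟩⟩⟩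
      have hreach : ∀ x : ↥T, (G.induce T).Reachable x ⟨v, hvT⟩ := by
        rintro ⟨x, hxT⟩
        obtain ⟨i, hi⟩ := Set.mem_iUnion.mp hxT
        have hr := (htreei i).isConnected.preconnected ⟨x, hi⟩
          ⟨v, ⟨⟨v, hv i⟩, hc0v i, rfl⟩⟩
        have hsub : Subtype.val '' (c0 i) ⊆ T :=
          Set.subset_iUnion (fun j => Subtype.val '' (c0 j)) i
        exact reachable_induce_mono hsub hr
      intro x y
      exact (hreach x).trans (hreach y).symm
    · intro u cyc hcyc
      have hcyc' : (cyc.map (SimpleGraph.Embedding.induce T).toHom).IsCycle :=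
        hcyc.map induce_val_injective
      have hsubT : ∀ x ∈ (cyc.map (SimpleGraph.Embedding.induce T).toHom).support, x ∈ T :=
        fun x hx => support_mem_of_walk_induce cyc hx
      have hu : ∃ i, (u : ↥T).1 ∈ s i := by
        have hx : (u : ↥T).1 ∈ ⋃ i, s i := by rw [hcov]; trivial
        exact Set.mem_iUnion.mp hx
      obtain ⟨i, hconf⟩ := cycle_confined hint hedge hv _ hcyc' hu
      exact false_of_cycle_support_subset hcyc'
        (fun x hx => hTi i ⟨hsubT x hx, hconf x hx⟩) (htreei i).IsAcyclic
  have hCovTC : IsTreeCover G Cov := by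
    refine ⟨?_, ?_, ?_⟩
    · intro t ht
      rcases Finset.mem_insert.mp ht with rfl | ht
      · exact hTtree
      · obtain ⟨i, -, hti⟩ := Finset.mem_biUnion.mp ht
        obtain ⟨c, hc, rfl⟩ := Finset.mem_image.mp hti
        exact htreeD i c hc
    · intro x
      have hx : x ∈ ⋃ i, s i := by rw [hcov]; trivial
      obtain ⟨i, hxi⟩ := Set.mem_iUnion.mp hx
      obtain ⟨c, hcC, hxc⟩ := (hC i).2.1 ⟨x, hxi⟩
      by_cases hcc : c = c0 i
      · refine ⟨T, Finset.mem_insert_self _ _, ?_⟩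
        exact Set.mem_iUnion.mpr ⟨i, ⟨⟨x, hxi⟩, hcc ▸ hxc, rfl⟩⟩
      · refine ⟨Subtype.val '' c, ?_, ⟨⟨x, hxi⟩, hxc, rfl⟩⟩
        refine Finset.mem_insert_of_mem (Finset.mem_biUnion.mpr ⟨i, Finset.mem_univ i, ?_⟩)
        exact Finset.mem_image.mpr ⟨c, Finset.mem_erase.mpr ⟨hcc, hcC⟩, rfl⟩
    · have hdisjTD : ∀ (i), ∀ c ∈ (C i).erase (c0 i), Disjoint T (Subtype.val '' c) := by
        intro i c hc
        rw [Set.disjoint_left]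
        intro x hxT hxc
        have hxi : x ∈ s i := hsubs i c hxc
        have hx0 : x ∈ Subtype.val '' (c0 i) := hTi i ⟨hxT, hxi⟩
        obtain ⟨y, hy, rfl⟩ := hx0
        obtain ⟨z, hz, hzy⟩ := hxc
        have hzy' : z = y := Subtype.ext hzy
        obtain ⟨hcne, hcC⟩ := Finset.mem_erase.mp hc
        have hd := (hC i).2.2 (Finset.mem_coe.mpr hcC) (Finset.mem_coe.mpr (hc0mem i)) hcne
        exact Set.disjoint_left.mp hd (hzy' ▸ hz) hy
      intro a ha b hb hab
      rw [Finset.mem_coe, hCovdef, Finset.mem_insert] at ha hb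
      have hD' : ∀ t, t ∈ Finset.univ.biUnion D →
          ∃ i, ∃ c ∈ (C i).erase (c0 i), t = Subtype.val '' c := by
        intro t ht
        obtain ⟨i, -, hti⟩ := Finset.mem_biUnion.mp ht
        obtain ⟨c, hc, rfl⟩ := Finset.mem_image.mp hti
        exact ⟨i, c, hc, rfl⟩
      rcases ha with rfl | ha <;> rcases hb with rfl | hb
      · exact absurd rfl hab
      · obtain ⟨i, c, hc, rfl⟩ := hD' b hb
        exact hdisjTD i c hc
      · obtain ⟨i, c, hc, rfl⟩ := hD' a ha
        exact (hdisjTD i c hc).symm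
      · obtain ⟨i, c, hc, rfl⟩ := hD' a ha
        obtain ⟨j, c', hc', rfl⟩ := hD' b hb
        by_cases hij : i = j
        · subst hij
          have hcc' : c ≠ c' := fun e => hab (by rw [e])
          have hd := (hC i).2.2 (Finset.mem_coe.mpr (Finset.mem_of_mem_erase hc))
            (Finset.mem_coe.mpr (Finset.mem_of_mem_erase hc')) hcc'
          exact (Set.disjoint_image_iff Subtype.val_injective).mpr hd
        · refine Set.disjoint_left.mpr ?_
          intro x hxc hxc'
          have hxv : x ∈ s i ∩ s j := ⟨hsubs i c hxc, hsubs j c' hxc'⟩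
          rw [hint i j hij] at hxv
          exact hvnotD i c hc (hxv ▸ hxc)
  have hcard1 : Cov.card ≤ (Finset.univ.biUnion D).card + 1 := Finset.card_insert_le _ _
  have hcard2 : (Finset.univ.biUnion D).card ≤ ∑ i, (D i).card :=
    Finset.card_biUnion_le
  have hcard3 : ∀ i, (D i).card + 1 ≤ treeCoverNumber (G.induce (s i)) := by
    intro i
    have h1 : (D i).card ≤ ((C i).erase (c0 i)).card := Finset.card_image_le
    have h2 : ((C i).erase (c0 i)).card = (C i).card - 1 :=
      Finset.card_erase_of_mem (hc0mem i)
    have h3 : 1 ≤ (C i).card := Finset.card_pos.mpr ⟨c0 i, hc0mem i⟩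
    have h4 := hCcard i
    omega
  have hcard4 : (∑ i, (D i).card) + h ≤ ∑ i, treeCoverNumber (G.induce (s i)) := by
    calc (∑ i, (D i).card) + h = ∑ i : Fin h, ((D i).card + 1) := by
          rw [Finset.sum_add_distrib]; simp
      _ ≤ ∑ i, treeCoverNumber (G.induce (s i)) :=
          Finset.sum_le_sum (fun i _ => hcard3 i)
  have hfin : treeCoverNumber G ≤ Cov.card := tcn_le hCovTC
  omega

theorem stmt_12 {V : Type} [Fintype V] (G : SimpleGraph V) (h : ℕ) (hh : 0 < h)
    (s : Fin h → Set V) (v : V)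
    (hint : ∀ i j, i ≠ j → s i ∩ s j = {v})
    (hcov : (⋃ i, s i) = Set.univ)
    (hedge : ∀ a b : V, G.Adj a b → ∃ i, a ∈ s i ∧ b ∈ s i) :
    treeCoverNumber G = (∑ i, treeCoverNumber (G.induce (s i))) - h + 1 := by
  have hv : ∀ j, v ∈ s j := by
    intro j
    have hvm : v ∈ ⋃ i, s i := by rw [hcov]; trivial
    obtain ⟨k, hk⟩ := Set.mem_iUnion.mp hvm
    by_cases hkj : k = j
    · exact hkj ▸ hk
    · have hm : v ∈ s j ∩ s k := by
        rw [hint j k (fun e => hkj e.symm)]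
        exact Set.mem_singleton v
      exact hm.1
  have h1 := sum_le_tcn hint hedge
  have h2 := tcn_le_sum hh hint hcov hedge hv
  have h3 : 1 ≤ treeCoverNumber G := by
    have : Nonempty V := ⟨v⟩
    exact tcn_pos
  omega
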